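/- Let q ∈ ℂ with |q| = 1, q ≠ ±1, and let W be the complex vector space with basis {W(s,t) : s,t ∈ ℂ}, made into a *-algebra by W(s₁,t₁)W(s₂,t₂) = e^{πiγ(s₂t₁ − s₁t₂)} W(s₁+s₂, t₁+t₂) and W(s,t)* = W(−conj(s), −conj(t)), where q = e^{2πiγ}, γ ∈ ℝ. Define a left action of U_q(gl₂) by E ▷ W(s,t) = (q−q⁻¹)⁻¹(e^{−2πγs} − e^{2πγs}) W(s+i, t−i), F ▷ W(s,t) = (q−q⁻¹)⁻¹(e^{−2πγt} − e^{2πγt}) W(s−i, t+i), K₁ ▷ W(s,t) = e^{πγs} W(s,t), K₂ ▷ W(s,t) = e^{πγt} W(s,t). Then E ▷ (W(s,t)·W(s',t')) = (E ▷ W(s,t))·(K ▷ W(s',t')) + (K⁻¹ ▷ W(s,t))·(E ▷ W(s',t')) for all s,t,s',t' ∈ ℂ. -/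
import Mathlib


/-- `q = e^{2πiγ}`. -/
noncomputable def qOf (γ : ℝ) : ℂ := Complex.exp ((2 * Real.pi * γ : ℝ) * Complex.I)

/-- `e^{2πγ s}` for complex `s`. -/
noncomputable def e2 (γ : ℝ) (s : ℂ) : ℂ := Complex.exp ((2 * Real.pi * γ : ℝ) * s)

/-- `e^{πγ s}` for complex `s`. -/
noncomputable def e1 (γ : ℝ) (s : ℂ) : ℂ := Complex.exp ((Real.pi * γ : ℝ) * s)

/-- Let `q = e^{2πiγ}`, `q ≠ ±1`, and let `W` be the *-algebra with basis
`W(s,t)` and product `W(s₁,t₁)W(s₂,t₂) = e^{πiγ(s₂t₁−s₁t₂)}W(s₁+s₂,t₁+t₂)`.  With the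
left `U_q(gl₂)`-action `E ▷ W(s,t) = λ⁻¹(e^{−2πγs}−e^{2πγs})W(s+i,t−i)`,
`K^{±1} ▷ W(s,t) = e^{±πγ(s−t)}W(s,t)`, the module-algebra compatibility for `E` holds:
`E ▷ (W(s,t)W(s',t')) = (E▷W(s,t))(K▷W(s',t')) + (K⁻¹▷W(s,t))(E▷W(s',t'))`. -/
theorem statement14 {A : Type*} [Ring A] [Algebra ℂ A]
    (γ : ℝ) (hq1 : qOf γ ≠ 1) (hqm1 : qOf γ ≠ -1)
    (W : ℂ → ℂ → A)
    (hmul : ∀ s₁ t₁ s₂ t₂ : ℂ,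
      W s₁ t₁ * W s₂ t₂ =
        Complex.exp ((Real.pi * γ : ℝ) * Complex.I * (s₂ * t₁ - s₁ * t₂)) •
          W (s₁ + s₂) (t₁ + t₂))
    (actE actK actKi : A →ₗ[ℂ] A)
    (hE : ∀ s t : ℂ, actE (W s t) =
      ((qOf γ - (qOf γ)⁻¹)⁻¹ * (e2 γ (-s) - e2 γ s)) • W (s + Complex.I) (t - Complex.I))
    (hK : ∀ s t : ℂ, actK (W s t) = e1 γ (s - t) • W s t)
    (hKi : ∀ s t : ℂ, actKi (W s t) = e1 γ (t - s) • W s t) :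
    ∀ s t s' t' : ℂ,
      actE (W s t * W s' t') =
        actE (W s t) * actK (W s' t') + actKi (W s t) * actE (W s' t') := by
  intro s t s' t'
  rw [hmul, map_smul, hE, hE, hE, hK, hKi]
  simp only [smul_mul_assoc, mul_smul_comm, hmul, smul_smul]
  have h1 : s + Complex.I + s' = s + s' + Complex.I := by ring
  have h2 : t - Complex.I + t' = t + t' - Complex.I := by ring
  have h3 : s + (s' + Complex.I) = s + s' + Complex.I := by ring
  have h4 : t + (t' - Complex.I) = t + t' - Complex.I := by ring
  rw [h1, h2, h3, h4, ← add_smul]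
  congr 1
  simp only [e1, e2, mul_sub, sub_mul, mul_add, add_mul, ← Complex.exp_add]
  push_cast
  ring_nf
  simp only [Complex.I_sq]
  rw [show ((qOf γ - (qOf γ)⁻¹)⁻¹ : ℂ) = Complex.exp 0 * (qOf γ - (qOf γ)⁻¹)⁻¹ by
    rw [Complex.exp_zero, one_mul]]
  simp only [mul_assoc, mul_left_comm _ ((qOf γ - (qOf γ)⁻¹)⁻¹) _, ← Complex.exp_add]
  ring_nf
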